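/- Let A = k[x,y]/(y² - x³ - ax - b) with 4a³ + 27b² ≠ 0, char k = 0. The module of k-derivations Der_k(A) is free of rank 1 over A, generated by ∂ = -2y·∂/∂x - (3x²+a)·∂/∂y. -/

import Mathlib

open MvPolynomial

/-- For `A = k[x,y]/(y² - x³ - ax - b)` with `4a³ + 27b² ≠ 0` over an
algebraically closed field of characteristic 0, the module `Der_k(A)` of `k`-derivations
is free of rank 1 over `A`, generated by `∂ = -2y·∂/∂x - (3x²+a)·∂/∂y`: every derivation
is an `A`-multiple of `∂`, and `m∂ = 0` implies `m = 0`. -/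
theorem derivations_free_rank_one (k : Type*) [Field k] [IsAlgClosed k] [CharZero k]
    (a b : k) (hΔ : 4 * a ^ 3 + 27 * b ^ 2 ≠ 0)
    (A : Type*) [CommRing A] [Algebra k A]
    (π : MvPolynomial (Fin 2) k →ₐ[k] A)
    (hπ : Function.Surjective π)
    (hker : RingHom.ker π.toRingHom =
      Ideal.span {(X 1 ^ 2 - X 0 ^ 3 - C a * X 0 - C b : MvPolynomial (Fin 2) k)})
    (d : Derivation k A A)
    (hx : d (π (X 0)) = π (-2 * X 1))
    (hy : d (π (X 1)) = π (-(3 * X 0 ^ 2 + C a))) :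
    (∀ D : Derivation k A A, ∃ m : A, D = m • d) ∧
    (∀ m : A, m • d = 0 → m = 0) := by
  set x : A := π (X 0) with hxdef
  set y : A := π (X 1) with hydef
  set a' : A := algebraMap k A a with ha'
  set b' : A := algebraMap k A b with hb'
  -- the relation in A
  have hfker : (X 1 ^ 2 - X 0 ^ 3 - C a * X 0 - C b : MvPolynomial (Fin 2) k) ∈
      RingHom.ker π.toRingHom := by
    rw [hker]; exact Ideal.mem_span_singleton_self _
  have hrel : y ^ 2 = x ^ 3 + a' * x + b' := by
    have h0 : π (X 1 ^ 2 - X 0 ^ 3 - C a * X 0 - C b) = 0 := hfker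
    have h1 : y ^ 2 - x ^ 3 - a' * x - b' = 0 := by
      simpa [map_sub, map_pow, map_mul, π.commutes, ← ha', ← hb'] using h0
    linear_combination h1
  -- values of d
  have hdx : d x = -(2 * y) := by
    rw [hx]; simp [map_mul, map_neg, map_ofNat]; rfl
  have hdy : d y = -(3 * x ^ 2 + a') := by
    rw [hy]; simp [map_add, map_neg, map_mul, map_pow, π.commutes, map_ofNat, ← ha']; rfl
  -- inverses of Δ and 2 in A
  set c : k := (4 * a ^ 3 + 27 * b ^ 2)⁻¹ with hcdef
  set αc : A := algebraMap k A c with hαc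
  set αh : A := algebraMap k A (2 : k)⁻¹ with hαh
  have hc : αc * (4 * a' ^ 3 + 27 * b' ^ 2) = 1 := by
    have h1 : (algebraMap k A) (c * (4 * a ^ 3 + 27 * b ^ 2)) = 1 := by
      rw [inv_mul_cancel₀ hΔ, map_one]
    rw [hαc, ha', hb']
    rw [map_mul, map_add, map_mul, map_mul, map_pow, map_pow, map_ofNat, map_ofNat] at h1
    linear_combination h1
  have hh : αh * 2 = 1 := by
    have h1 : (algebraMap k A) ((2 : k)⁻¹ * 2) = 1 := by
      rw [inv_mul_cancel₀ (two_ne_zero), map_one]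
    rw [hαh]
    rw [map_mul, map_ofNat] at h1
    linear_combination h1
  -- Bezout: p * (3x²+a') + q * (2y) = 1
  set p : A := αc * (9 * x ^ 4 + 15 * a' * x ^ 2 + 4 * a' ^ 2) with hpdef
  set q : A := αh * αc * (-(27 * x ^ 3) - 27 * a' * x + 27 * b') * y with hqdef
  have hpq : p * (3 * x ^ 2 + a') + q * (2 * y) = 1 := by
    rw [hpdef, hqdef]
    linear_combination (2 * αh * αc * (-(27 * x ^ 3) - 27 * a' * x + 27 * b')) * hrel +
      (αc * (-(27 * x ^ 3) - 27 * a' * x + 27 * b') * (x ^ 3 + a' * x + b')) * hh + hc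
  -- generators
  have htop : Algebra.adjoin k ({x, y} : Set A) = ⊤ := by
    rw [eq_top_iff]
    rintro z -
    obtain ⟨w, rfl⟩ := hπ z
    induction w using MvPolynomial.induction_on with
    | C r =>
        rw [show π (C r) = algebraMap k A r from π.commutes r]
        exact Subalgebra.algebraMap_mem _ r
    | add u v hu hv => rw [map_add]; exact add_mem hu hv
    | mul_X u i hu =>
        rw [map_mul]
        refine mul_mem hu (Algebra.subset_adjoin ?_)
        fin_cases i
        · left; rfl
        · right; rfl
  constructor
  · intro D
    -- differentiate the relation
    have hy2 : D (y ^ 2) = 2 * y * D y := by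
      rw [pow_two, Derivation.leibniz]
      simp only [smul_eq_mul]
      ring
    have hx3 : D (x ^ 3) = 3 * x ^ 2 * D x := by
      rw [show (x ^ 3 : A) = x * (x * x) by ring]
      rw [Derivation.leibniz, Derivation.leibniz]
      simp only [smul_eq_mul]
      ring
    have hax : D (a' * x) = a' * D x := by
      rw [ha', ← Algebra.smul_def, Derivation.map_smul, Algebra.smul_def, ← ha']
    have hbD : D b' = 0 := by rw [hb']; exact Derivation.map_algebraMap D b
    have hD : 2 * y * D y = 3 * x ^ 2 * D x + a' * D x := by
      have h := congrArg (⇑D) hrel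
      rw [hy2, map_add, map_add, hx3, hax, hbD, add_zero] at h
      exact h
    refine ⟨-(p * D y) - q * D x, ?_⟩
    refine (Derivation.ext_of_adjoin_eq_top _ htop ?_).symm
    rintro z (h | h)
    · rw [h, Derivation.smul_apply, smul_eq_mul, hdx]
      linear_combination p * hD + D x * hpq
    · simp only [Set.mem_singleton_iff] at h
      rw [h, Derivation.smul_apply, smul_eq_mul, hdy]
      linear_combination (-q) * hD + D y * hpq
  · intro m hm
    have e1 : m * -(2 * y) = 0 := by
      have := congrArg (fun D : Derivation k A A => D x) hm
      simpa [Derivation.smul_apply, smul_eq_mul, hdx] using this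
    have e2 : m * -(3 * x ^ 2 + a') = 0 := by
      have := congrArg (fun D : Derivation k A A => D y) hm
      simpa [Derivation.smul_apply, smul_eq_mul, hdy] using this
    linear_combination (-m) * hpq + (-p) * e2 + (-q) * e1
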